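/- For an odd prime p, the constant term of the minimal polynomial of 2cos(π/p) satisfies C(p,0) = (-1)^{(p-1)/4} if p ≡ 1 (mod 4), and C(p,0) = (-1)^{(p+1)/4} if p ≡ 3 (mod 4). In particular |C(p,0)| = 1. -/

import Mathlib

open Real

open Polynomial Complex IntermediateField Module

set_option maxHeartbeats 1000000
set_option synthInstance.maxHeartbeats 1000000

/-- For an odd prime p, the constant term of the minimal polynomial of 2cos(π/p) is
(-1)^{(p-1)/4} if p ≡ 1 (mod 4) and (-1)^{(p+1)/4} if p ≡ 3 (mod 4); in particular its
absolute value is 1. -/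
theorem constant_term_C_p (p : ℕ) (hp : p.Prime) (hodd : Odd p) :
    (minpoly ℚ ((2 : ℝ) * Real.cos (π / p))).coeff 0 =
      (if p % 4 = 1 then (-1 : ℚ) ^ ((p - 1) / 4) else (-1 : ℚ) ^ ((p + 1) / 4)) ∧
    |(minpoly ℚ ((2 : ℝ) * Real.cos (π / p))).coeff 0| = 1 := by
  haveI := Fact.mk hp
  have hpmod2 : p % 2 = 1 := Nat.odd_iff.mp hodd
  have hp3 : 3 ≤ p := by have := hp.two_le; omega
  have hp0 : (p : ℂ) ≠ 0 := Nat.cast_ne_zero.mpr hp.ne_zero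
  have h2ppos : 0 < 2 * p := by omega
  -- stage 1 : the primitive root
  set ζ : ℂ := Complex.exp (↑π * Complex.I / p) with hζdef
  have hζ : IsPrimitiveRoot ζ (2 * p) := by
    have := Complex.isPrimitiveRoot_exp (2 * p) (by omega)
    convert this using 2
    push_cast
    field_simp
  have hzr : ((((2:ℝ) * Real.cos (π / p)) : ℝ) : ℂ) = ζ + ζ⁻¹ := by
    rw [hζdef, ← Complex.exp_neg]
    push_cast
    rw [Complex.cos]
    ring_nf
  have hζ0 : ζ ≠ 0 := Complex.exp_ne_zero _
  have hζint : IsIntegral ℚ ζ := (hζ.isIntegral h2ppos).tower_top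
  have hζinv : ζ⁻¹ = ζ ^ (2 * p - 1) := by
    refine inv_eq_of_mul_eq_one_left ?_
    rw [← pow_succ, Nat.sub_add_cancel h2ppos, hζ.pow_eq_one]
  have hzint' : IsIntegral ℚ (ζ + ζ⁻¹) := hζint.add (hζinv ▸ hζint.pow _)
  set θ : ℝ := (2:ℝ) * Real.cos (π / p) with hθdef
  have hθint : IsIntegral ℚ θ := by
    have h1 : IsIntegral ℚ (((θ:ℝ):ℂ)) := hzr ▸ hzint'
    exact (isIntegral_algebraMap_iff (algebraMap ℝ ℂ).injective).mp h1
  have hζim : ζ.im ≠ 0 := by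
    have harg : ↑π * Complex.I / p = ((π / p : ℝ) : ℂ) * Complex.I := by
      push_cast; ring
    rw [hζdef, harg, Complex.exp_ofReal_mul_I_im]
    have h1 : 0 < π / p := by positivity
    have h2 : π / p < π := by
      rw [div_lt_iff₀ (by positivity)]
      have hp1 : (1:ℝ) < p := by exact_mod_cast (by omega : 1 < p)
      calc π = π * 1 := by ring
        _ < π * p := mul_lt_mul_of_pos_left hp1 Real.pi_pos
    exact ne_of_gt (Real.sin_pos_of_pos_of_lt_pi h1 h2)
  -- stage 2 : the auxiliary polynomial h
  set g : ℚ[X] := minpoly ℚ θ with hgdef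
  set m : ℕ := g.natDegree with hmdef
  have hgmonic : g.Monic := minpoly.monic hθint
  have hm1 : 1 ≤ m := minpoly.natDegree_pos hθint
  set h : ℚ[X] := ∑ k ∈ Finset.range (m+1), C (g.coeff k) * (X^2+1)^k * X^(m-k) with hhdef
  have hz : aeval (ζ + ζ⁻¹) g = 0 := by
    rw [← hzr]
    have : ((θ : ℝ) : ℂ) = algebraMap ℝ ℂ θ := rfl
    rw [this, aeval_algebraMap_apply, minpoly.aeval, map_zero]
  have haeval : aeval ζ h = 0 := by
    have heq : aeval ζ h = ∑ k ∈ Finset.range (m+1),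
        (g.coeff k : ℂ) * (ζ^2+1)^k * ζ^(m-k) := by
      rw [hhdef, map_sum]
      simp [Rat.smul_def]
    rw [heq]
    have hterm : ∀ k ∈ Finset.range (m+1),
        (g.coeff k : ℂ) * (ζ^2+1)^k * ζ^(m-k) = ζ^m * ((g.coeff k : ℂ) * (ζ + ζ⁻¹)^k) := by
      intro k hk
      rw [Finset.mem_range] at hk
      have hk' : k ≤ m := Nat.lt_succ_iff.mp hk
      have h1 : ζ^2 + 1 = ζ * (ζ + ζ⁻¹) := by
        field_simp
      have h2 : ζ^k * ζ^(m-k) = ζ^m := by rw [← pow_add, Nat.add_sub_cancel' hk']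
      rw [h1, mul_pow, ← h2]
      ring
    rw [Finset.sum_congr rfl hterm, ← Finset.mul_sum]
    have heq2 : ∑ k ∈ Finset.range (m+1), (g.coeff k : ℂ) * (ζ + ζ⁻¹)^k = aeval (ζ + ζ⁻¹) g := by
      rw [aeval_eq_sum_range]
      simp [Rat.smul_def]
      rfl
    rw [heq2, hz, mul_zero]
  set s : ℚ[X] := (X^2+1)^m with hsdef
  have hsmonic : s.Monic := by
    have : ((X:ℚ[X])^2+1).Monic := by simpa using monic_X_pow_add_C (1:ℚ) (two_ne_zero)
    exact this.pow m
  have hsdeg : s.natDegree = 2*m := by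
    rw [hsdef, natDegree_pow]
    have : ((X:ℚ[X])^2+1).natDegree = 2 := by simpa using natDegree_X_pow_add_C (n := 2) (r := (1:ℚ))
    rw [this]; ring
  set r : ℚ[X] := ∑ k ∈ Finset.range m, C (g.coeff k) * (X^2+1)^k * X^(m-k) with hrdef
  have hhr : h = r + s := by
    rw [hhdef, Finset.sum_range_succ, hrdef]
    congr 1
    have hc : g.coeff m = 1 := by rw [hmdef]; exact hgmonic.coeff_natDegree
    simp [hc, hsdef]
  have hrdeg : r.natDegree ≤ 2*m - 1 := by
    refine natDegree_sum_le_of_forall_le _ _ ?_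
    intro k hk
    rw [Finset.mem_range] at hk
    calc (C (g.coeff k) * (X^2+1)^k * X^(m-k)).natDegree
        ≤ (C (g.coeff k) * (X^2+1)^k).natDegree + (X^(m-k):ℚ[X]).natDegree := natDegree_mul_le
      _ ≤ ((C (g.coeff k)).natDegree + ((X^2+1:ℚ[X])^k).natDegree) + (X^(m-k):ℚ[X]).natDegree := by
          gcongr; exact natDegree_mul_le
      _ ≤ (0 + 2*k) + (m-k) := by
          gcongr
          · simp
          · rw [natDegree_pow]
            have h3 : ((X:ℚ[X])^2+1).natDegree = 2 := by
              simpa using natDegree_X_pow_add_C (n := 2) (r := (1:ℚ))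
            rw [h3]; omega
          · simp [natDegree_X_pow]
      _ ≤ 2*m - 1 := by omega
  have hrdeg' : r.degree < s.degree := by
    rw [degree_eq_natDegree hsmonic.ne_zero]
    refine lt_of_le_of_lt degree_le_natDegree ?_
    rw [hsdeg]
    exact_mod_cast (by omega : r.natDegree < 2*m)
  have hhmonic : h.Monic := by
    rw [hhr]; exact hsmonic.add_of_right hrdeg'
  have hhdeg : h.natDegree = 2*m := by
    rw [hhr, natDegree_add_eq_right_of_degree_lt hrdeg', hsdeg]
  have hdvd : cyclotomic (2*p) ℚ ∣ h := by
    rw [cyclotomic_eq_minpoly_rat hζ h2ppos]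
    exact minpoly.dvd ℚ ζ haeval
  have hcycdeg : (cyclotomic (2*p) ℚ).natDegree = p - 1 := by
    rw [natDegree_cyclotomic, Nat.totient_mul (Nat.coprime_two_left.mpr hodd), Nat.totient_two,
      one_mul, Nat.totient_prime hp]
  have hlow : p - 1 ≤ 2*m := by
    have := natDegree_le_of_dvd hdvd hhmonic.ne_zero
    rwa [hhdeg, hcycdeg] at this
  -- stage 3 : field theory upper bound
  have hupp : 2 * m ≤ p - 1 := by
    set z : ℂ := ((θ : ℝ) : ℂ) with hzdefn
    have hzint : IsIntegral ℚ z := hzr ▸ hzint'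
    have hminz : minpoly ℚ z = minpoly ℚ θ := minpoly.algebraMap_eq (algebraMap ℝ ℂ).injective θ
    set K : IntermediateField ℚ ℂ := ℚ⟮z⟯ with hKdef
    set L : IntermediateField ℚ ℂ := ℚ⟮ζ⟯ with hLdef
    have hKrank : finrank ℚ K = m := by
      rw [hKdef, adjoin.finrank hzint, hminz, ← hgdef]
    have hLrank : finrank ℚ L = p - 1 := by
      rw [hLdef, adjoin.finrank hζint, ← cyclotomic_eq_minpoly_rat hζ h2ppos, hcycdeg]
    have hζmemL : ζ ∈ L := mem_adjoin_simple_self ℚ ζ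
    have hKL : K ≤ L := by
      rw [hKdef, adjoin_simple_le_iff, hzr]
      exact add_mem hζmemL (inv_mem hζmemL)
    have hζnotK : ζ ∉ K := by
      intro hmem
      have hKreal : K ≤ (IsScalarTower.toAlgHom ℚ ℝ ℂ).fieldRange := by
        rw [hKdef, adjoin_simple_le_iff]
        exact ⟨θ, rfl⟩
      obtain ⟨rr, hrr⟩ := hKreal hmem
      apply hζim
      rw [← hrr]
      simp [IsScalarTower.toAlgHom]
    set L' : IntermediateField K ℂ := extendScalars hKL with hL'def
    have hζmemL' : ζ ∈ L' := hζmemL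
    have htower : finrank ℚ K * finrank K L' = finrank ℚ L := by
      have := Module.finrank_mul_finrank ℚ K L'
      rw [this]
      rfl
    have hd1 : finrank K L' ≠ 1 := by
      intro h1
      rw [IntermediateField.finrank_eq_one_iff] at h1
      rw [h1, IntermediateField.mem_bot] at hζmemL'
      obtain ⟨k, hk⟩ := hζmemL'
      exact hζnotK (hk ▸ k.2)
    have hd0 : finrank K L' ≠ 0 := by
      intro h0
      rw [hKrank, h0, mul_zero] at htower
      omega
    have h2d : 2 ≤ finrank K L' := by omega
    calc 2 * m = m * 2 := by ring
      _ ≤ m * finrank K L' := Nat.mul_le_mul_left m h2d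
      _ = p - 1 := by rw [← hKrank, htower, hLrank]
  have h2m : 2 * m = p - 1 := le_antisymm hupp hlow
  -- stage 4 : h equals the cyclotomic polynomial; evaluation at I
  have hΦeq : cyclotomic (2*p) ℚ = h := by
    refine eq_of_dvd_of_natDegree_le_of_leadingCoeff hdvd ?_ ?_
    · rw [hhdeg, hcycdeg, h2m]
    · rw [(cyclotomic.monic _ ℚ).leadingCoeff, hhmonic.leadingCoeff]
  have haevalI : aeval Complex.I h = (g.coeff 0 : ℂ) * Complex.I ^ m := by
    rw [hhdef, map_sum, Finset.sum_eq_single_of_mem 0 (Finset.mem_range.mpr (by omega))]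
    · simp [Rat.smul_def]
    · intro b _ hb
      simp [Rat.smul_def, Complex.I_sq, zero_pow hb]
  have hmapI : eval Complex.I (cyclotomic (2*p) ℂ) = (g.coeff 0 : ℂ) * Complex.I ^ m := by
    rw [← map_cyclotomic (2*p) (algebraMap ℚ ℂ), hΦeq, eval_map, ← aeval_def, haevalI]
  have hprod := prod_cyclotomic_eq_X_pow_sub_one h2ppos ℂ
  have hdivs : (2*p).divisors = {1, 2, p, 2*p} := by
    ext d
    rw [Nat.mem_divisors]
    simp only [Finset.mem_insert, Finset.mem_singleton]
    constructor
    · rintro ⟨hd, -⟩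
      obtain ⟨a, b, ha, hb, rfl⟩ := Nat.dvd_mul.mp hd
      rcases (Nat.prime_two.eq_one_or_self_of_dvd a ha) with rfl | rfl <;>
        rcases (hp.eq_one_or_self_of_dvd b hb) with rfl | rfl <;> simp
    · rintro (rfl | rfl | hd | rfl)
      · exact ⟨one_dvd _, by omega⟩
      · exact ⟨Dvd.intro p rfl, by omega⟩
      · rw [hd]; exact ⟨dvd_mul_left p 2, by omega⟩
      · exact ⟨dvd_refl _, by omega⟩
  have hn1 : (1:ℕ) ∉ ({2, p, 2*p} : Finset ℕ) := by
    simp only [Finset.mem_insert, Finset.mem_singleton]; omega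
  have hn2 : (2:ℕ) ∉ ({p, 2*p} : Finset ℕ) := by
    simp only [Finset.mem_insert, Finset.mem_singleton]; omega
  have hn3 : p ∉ ({2*p} : Finset ℕ) := by
    simp only [Finset.mem_singleton]; omega
  rw [hdivs, Finset.prod_insert hn1, Finset.prod_insert hn2, Finset.prod_insert hn3,
    Finset.prod_singleton] at hprod
  have heval := congrArg (eval Complex.I) hprod
  simp only [eval_mul, eval_sub, eval_pow, eval_X, eval_one, cyclotomic_one, cyclotomic_two,
    eval_add, hmapI] at heval
  have hI2p : Complex.I ^ (2*p) = -1 := by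
    rw [pow_mul, Complex.I_sq]
    exact Odd.neg_one_pow hodd
  rw [hI2p] at heval
  -- heval : (I - 1) * ((I + 1) * (eval I (cyclotomic p ℂ) * (c₀ * I^m))) = -1 - 1
  have hgeom : eval Complex.I (cyclotomic p ℂ) * (Complex.I - 1) = Complex.I ^ p - 1 := by
    rw [cyclotomic_prime, eval_finset_sum]
    simp only [eval_pow, eval_X]
    exact geom_sum_mul Complex.I p
  have hI2 : Complex.I ^ 2 = -1 := Complex.I_sq
  set w : ℂ := (g.coeff 0 : ℂ) * Complex.I ^ m with hwdef
  have hIpow : Complex.I ^ p = Complex.I ^ (p % 4) := by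
    conv_lhs => rw [← Nat.div_add_mod p 4, pow_add, pow_mul, Complex.I_pow_four, one_pow, one_mul]
  have hval : g.coeff 0 = (if p % 4 = 1 then (-1 : ℚ) ^ ((p - 1) / 4) else (-1 : ℚ) ^ ((p + 1) / 4)) := by
    have hcases : p % 4 = 1 ∨ p % 4 = 3 := by omega
    rcases hcases with h4 | h4
    · rw [if_pos h4]
      set a : ℕ := (p - 1) / 4 with hadef
      have hIp : Complex.I ^ p = Complex.I := by rw [hIpow, h4, pow_one]
      rw [hIp] at hgeom
      have hw1 : w = 1 := by
        linear_combination (-(1/2) : ℂ) * heval + ((1/2)*(Complex.I+1)*w) * hgeom + ((1/2)*w) * hI2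
      have hma : m = 2 * a := by omega
      have hw2 : (g.coeff 0 : ℂ) * (-1)^a = 1 := by
        have hwa : w = (g.coeff 0 : ℂ) * (-1)^a := by rw [hwdef, hma, pow_mul, hI2]
        rw [← hwa]; exact hw1
      have hsq : ((-1:ℂ)^a) * ((-1:ℂ)^a) = 1 := by
        rw [← pow_add]
        exact Even.neg_one_pow ⟨a, rfl⟩
      have hfin : (g.coeff 0 : ℂ) = (-1)^a := by
        linear_combination ((-1:ℂ)^a) * hw2 - (g.coeff 0 : ℂ) * hsq
      exact_mod_cast hfin
    · rw [if_neg (by omega)]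
      set b : ℕ := (p + 1) / 4 with hbdef
      have hIp : Complex.I ^ p = -Complex.I := by
        rw [hIpow, h4, pow_succ, hI2]; ring
      rw [hIp] at hgeom
      have hw1 : Complex.I * w = 1 := by
        linear_combination (-(1/2) : ℂ) * heval + ((1/2)*(Complex.I+1)*w) * hgeom + (-(1/2)*w) * hI2
      have hmb : m + 1 = 2 * b := by omega
      have hw2 : (g.coeff 0 : ℂ) * (-1)^b = 1 := by
        have hwb : Complex.I * w = (g.coeff 0 : ℂ) * (-1)^b := by
          rw [hwdef, show Complex.I * ((g.coeff 0 : ℂ) * Complex.I ^ m)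
              = (g.coeff 0 : ℂ) * Complex.I ^ (m+1) by rw [pow_succ]; ring,
            hmb, pow_mul, hI2]
        rw [← hwb]; exact hw1
      have hsq : ((-1:ℂ)^b) * ((-1:ℂ)^b) = 1 := by
        rw [← pow_add]
        exact Even.neg_one_pow ⟨b, rfl⟩
      have hfin : (g.coeff 0 : ℂ) = (-1)^b := by
        linear_combination ((-1:ℂ)^b) * hw2 - (g.coeff 0 : ℂ) * hsq
      exact_mod_cast hfin
  refine ⟨hval, ?_⟩
  rw [hval]
  split_ifs <;> simp [_root_.abs_pow]
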